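/- Let n1, n2 be natural numbers, a_1,…,a_{n1}, b_1,…,b_{n2} ∈ ℂ, z_1,…,z_{n1} ∈ ℂ and z* ∈ ℂ, and define f(z) = Σ_{j=1}^{n1} a_j cot((z − z_j)/2) + Σ_{j=1}^{n2} b_j tan((z − z*)/2)^j. Then f(z) tends to the constant −i·Σ_{j=1}^{n1} a_j + Σ_{j=1}^{n2} b_j i^j as Im z tends to +∞, and f(z) tends to the constant i·Σ_{j=1}^{n1} a_j + Σ_{j=1}^{n2} b_j (−i)^j as Im z tends to −∞. -/

import Mathlib

open Filter Topology

namespace LightningAux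

open Complex

lemma tan_eq_exp_ratio (z : ℂ) :
    tan z = I * (1 - Complex.exp (2 * I * z)) / (1 + Complex.exp (2 * I * z)) := by
  rw [Complex.tan, Complex.sin, Complex.cos]
  simp only [neg_mul]
  have h1 : exp (z * I) + exp (-(z * I)) = exp (-(z * I)) * (1 + exp (2 * I * z)) := by
    rw [mul_add, ← Complex.exp_add]
    simp only [mul_one, add_right_inj]
    ring_nf
  have h2 : (exp (-(z * I)) - exp (z * I)) * I = exp (-(z * I)) * (I * (1 - exp (2 * I * z))) := by
    ring_nf
    rw [mul_assoc, ← Complex.exp_add]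
    ring_nf
  rw [h2, h1, div_div_div_cancel_right₀ two_ne_zero,
    mul_div_mul_left _ _ (Complex.exp_ne_zero _)]

lemma exp_I_tendsto_top :
    Tendsto (fun z : ℂ => Complex.exp (I * z)) (comap Complex.im atTop) (𝓝 0) := by
  rw [tendsto_zero_iff_norm_tendsto_zero]
  have h : ∀ z : ℂ, ‖Complex.exp (I * z)‖ = Real.exp (-z.im) := by
    intro z
    rw [Complex.norm_exp]
    congr 1
    simp [Complex.mul_re]
  simp only [h]
  exact Real.tendsto_exp_atBot.comp (tendsto_neg_atBot_iff.mpr tendsto_comap)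

lemma exp_negI_tendsto_bot :
    Tendsto (fun z : ℂ => Complex.exp (-(I * z))) (comap Complex.im atBot) (𝓝 0) := by
  rw [tendsto_zero_iff_norm_tendsto_zero]
  have h : ∀ z : ℂ, ‖Complex.exp (-(I * z))‖ = Real.exp z.im := by
    intro z
    rw [Complex.norm_exp]
    congr 1
    simp [Complex.mul_re]
  simp only [h]
  exact Real.tendsto_exp_atBot.comp tendsto_comap

lemma q_tendsto_top (c : ℂ) :
    Tendsto (fun z : ℂ => Complex.exp (I * (z - c))) (comap Complex.im atTop) (𝓝 0) := by
  have h : (fun z : ℂ => Complex.exp (I * (z - c)))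
      = fun z : ℂ => Complex.exp (I * z) * Complex.exp (-(I * c)) := by
    funext z; rw [← Complex.exp_add]; ring_nf
  rw [h]
  simpa using exp_I_tendsto_top.mul_const (Complex.exp (-(I * c)))

lemma p_tendsto_bot (c : ℂ) :
    Tendsto (fun z : ℂ => Complex.exp (-(I * (z - c)))) (comap Complex.im atBot) (𝓝 0) := by
  have h : (fun z : ℂ => Complex.exp (-(I * (z - c))))
      = fun z : ℂ => Complex.exp (-(I * z)) * Complex.exp (I * c) := by
    funext z; rw [← Complex.exp_add]; ring_nf
  rw [h]
  simpa using exp_negI_tendsto_bot.mul_const (Complex.exp (I * c))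

lemma cot_tendsto_top (c : ℂ) :
    Tendsto (fun z : ℂ => cot ((z - c) / 2)) (comap Complex.im atTop) (𝓝 (-I)) := by
  have hrw : ∀ z : ℂ, cot ((z - c) / 2)
      = (Complex.exp (I * (z - c)) + 1) / (I * (1 - Complex.exp (I * (z - c)))) := by
    intro z
    rw [Complex.cot_eq_exp_ratio]
    ring_nf
  simp only [hrw]
  have hq := q_tendsto_top c
  have hnum : Tendsto (fun z : ℂ => Complex.exp (I * (z - c)) + 1)
      (comap Complex.im atTop) (𝓝 1) := by
    simpa using hq.add (tendsto_const_nhds (x := (1 : ℂ)))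
  have hden : Tendsto (fun z : ℂ => I * (1 - Complex.exp (I * (z - c))))
      (comap Complex.im atTop) (𝓝 I) := by
    simpa using ((tendsto_const_nhds (x := (1 : ℂ))).sub hq).const_mul I
  have h := hnum.div hden I_ne_zero
  rw [one_div, Complex.inv_I] at h
  exact h

lemma cot_tendsto_bot (c : ℂ) :
    Tendsto (fun z : ℂ => cot ((z - c) / 2)) (comap Complex.im atBot) (𝓝 I) := by
  have hrw : ∀ z : ℂ, cot ((z - c) / 2)
      = (1 + Complex.exp (-(I * (z - c)))) / (I * (Complex.exp (-(I * (z - c))) - 1)) := by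
    intro z
    rw [Complex.cot_eq_exp_ratio]
    have hne := Complex.exp_ne_zero (-(I * (z - c)))
    have hq : Complex.exp (2 * I * ((z - c) / 2)) = (Complex.exp (-(I * (z - c))))⁻¹ := by
      rw [← Complex.exp_neg]
      ring_nf
    rw [hq]
    set p := Complex.exp (-(I * (z - c)))
    field_simp
  simp only [hrw]
  have hp := p_tendsto_bot c
  have hnum : Tendsto (fun z : ℂ => 1 + Complex.exp (-(I * (z - c))))
      (comap Complex.im atBot) (𝓝 1) := by
    simpa using (tendsto_const_nhds (x := (1 : ℂ))).add hp
  have hden : Tendsto (fun z : ℂ => I * (Complex.exp (-(I * (z - c))) - 1))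
      (comap Complex.im atBot) (𝓝 (-I)) := by
    simpa using (hp.sub (tendsto_const_nhds (x := (1 : ℂ)))).const_mul I
  have h := hnum.div hden (neg_ne_zero.mpr I_ne_zero)
  have hval : (1 : ℂ) / (-I) = I := by
    rw [div_neg, Complex.div_I]
    simp
  rw [hval] at h
  exact h

lemma tan_tendsto_top (c : ℂ) :
    Tendsto (fun z : ℂ => tan ((z - c) / 2)) (comap Complex.im atTop) (𝓝 I) := by
  have hrw : ∀ z : ℂ, tan ((z - c) / 2)
      = I * (1 - Complex.exp (I * (z - c))) / (1 + Complex.exp (I * (z - c))) := by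
    intro z
    rw [tan_eq_exp_ratio]
    ring_nf
  simp only [hrw]
  have hq := q_tendsto_top c
  have hnum : Tendsto (fun z : ℂ => I * (1 - Complex.exp (I * (z - c))))
      (comap Complex.im atTop) (𝓝 I) := by
    simpa using ((tendsto_const_nhds (x := (1 : ℂ))).sub hq).const_mul I
  have hden : Tendsto (fun z : ℂ => 1 + Complex.exp (I * (z - c)))
      (comap Complex.im atTop) (𝓝 1) := by
    simpa using (tendsto_const_nhds (x := (1 : ℂ))).add hq
  have h := hnum.div hden one_ne_zero
  rw [div_one] at h
  exact h

lemma tan_tendsto_bot (c : ℂ) :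
    Tendsto (fun z : ℂ => tan ((z - c) / 2)) (comap Complex.im atBot) (𝓝 (-I)) := by
  have hrw : ∀ z : ℂ, tan ((z - c) / 2)
      = I * (Complex.exp (-(I * (z - c))) - 1) / (Complex.exp (-(I * (z - c))) + 1) := by
    intro z
    rw [tan_eq_exp_ratio]
    have hne := Complex.exp_ne_zero (-(I * (z - c)))
    have hq : Complex.exp (2 * I * ((z - c) / 2)) = (Complex.exp (-(I * (z - c))))⁻¹ := by
      rw [← Complex.exp_neg]
      ring_nf
    rw [hq]
    set p := Complex.exp (-(I * (z - c)))
    field_simp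
  simp only [hrw]
  have hp := p_tendsto_bot c
  have hnum : Tendsto (fun z : ℂ => I * (Complex.exp (-(I * (z - c))) - 1))
      (comap Complex.im atBot) (𝓝 (-I)) := by
    simpa using (hp.sub (tendsto_const_nhds (x := (1 : ℂ)))).const_mul I
  have hden : Tendsto (fun z : ℂ => Complex.exp (-(I * (z - c))) + 1)
      (comap Complex.im atBot) (𝓝 1) := by
    simpa using hp.add (tendsto_const_nhds (x := (1 : ℂ)))
  have h := hnum.div hden one_ne_zero
  rw [div_one] at h
  exact h

end LightningAux

/-- The periodized lightning ansatz
`f(z) = Σ_{j=1}^{n1} a_j cot((z − z_j)/2) + Σ_{j=1}^{n2} b_j tan((z − z*)/2)^j`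
tends to `−i·Σ a_j + Σ b_j i^j` as `Im z → +∞` and to
`i·Σ a_j + Σ b_j (−i)^j` as `Im z → −∞`. -/
theorem lightning_ansatz_limits_at_infinity (n1 n2 : ℕ) (a b zs : ℕ → ℂ) (zstar : ℂ)
    (f : ℂ → ℂ)
    (hf : ∀ z : ℂ, f z =
        (∑ j ∈ Finset.Icc 1 n1, a j * Complex.cot ((z - zs j) / 2)) +
        (∑ j ∈ Finset.Icc 1 n2, b j * Complex.tan ((z - zstar) / 2) ^ j)) :
    Filter.Tendsto f (Filter.comap Complex.im Filter.atTop)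
      (𝓝 (-Complex.I * (∑ j ∈ Finset.Icc 1 n1, a j)
          + ∑ j ∈ Finset.Icc 1 n2, b j * Complex.I ^ j)) ∧
    Filter.Tendsto f (Filter.comap Complex.im Filter.atBot)
      (𝓝 (Complex.I * (∑ j ∈ Finset.Icc 1 n1, a j)
          + ∑ j ∈ Finset.Icc 1 n2, b j * (-Complex.I) ^ j)) := by
  have hfe : f = fun z =>
      (∑ j ∈ Finset.Icc 1 n1, a j * Complex.cot ((z - zs j) / 2)) +
      (∑ j ∈ Finset.Icc 1 n2, b j * Complex.tan ((z - zstar) / 2) ^ j) := funext hf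
  constructor
  · rw [hfe]
    have h1 : Filter.Tendsto
        (fun z : ℂ => ∑ j ∈ Finset.Icc 1 n1, a j * Complex.cot ((z - zs j) / 2))
        (Filter.comap Complex.im Filter.atTop)
        (𝓝 (∑ j ∈ Finset.Icc 1 n1, a j * -Complex.I)) :=
      tendsto_finset_sum _ fun j _ => (LightningAux.cot_tendsto_top (zs j)).const_mul (a j)
    have h2 : Filter.Tendsto
        (fun z : ℂ => ∑ j ∈ Finset.Icc 1 n2, b j * Complex.tan ((z - zstar) / 2) ^ j)
        (Filter.comap Complex.im Filter.atTop)
        (𝓝 (∑ j ∈ Finset.Icc 1 n2, b j * Complex.I ^ j)) :=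
      tendsto_finset_sum _ fun j _ => ((LightningAux.tan_tendsto_top zstar).pow j).const_mul (b j)
    have heq : -Complex.I * (∑ j ∈ Finset.Icc 1 n1, a j)
        = ∑ j ∈ Finset.Icc 1 n1, a j * -Complex.I := by
      rw [Finset.mul_sum]
      exact Finset.sum_congr rfl fun j _ => by ring
    rw [heq]
    exact h1.add h2
  · rw [hfe]
    have h1 : Filter.Tendsto
        (fun z : ℂ => ∑ j ∈ Finset.Icc 1 n1, a j * Complex.cot ((z - zs j) / 2))
        (Filter.comap Complex.im Filter.atBot)
        (𝓝 (∑ j ∈ Finset.Icc 1 n1, a j * Complex.I)) :=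
      tendsto_finset_sum _ fun j _ => (LightningAux.cot_tendsto_bot (zs j)).const_mul (a j)
    have h2 : Filter.Tendsto
        (fun z : ℂ => ∑ j ∈ Finset.Icc 1 n2, b j * Complex.tan ((z - zstar) / 2) ^ j)
        (Filter.comap Complex.im Filter.atBot)
        (𝓝 (∑ j ∈ Finset.Icc 1 n2, b j * (-Complex.I) ^ j)) :=
      tendsto_finset_sum _ fun j _ => ((LightningAux.tan_tendsto_bot zstar).pow j).const_mul (b j)
    have heq : Complex.I * (∑ j ∈ Finset.Icc 1 n1, a j)
        = ∑ j ∈ Finset.Icc 1 n1, a j * Complex.I := by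
      rw [Finset.mul_sum]
      exact Finset.sum_congr rfl fun j _ => by ring
    rw [heq]
    exact h1.add h2
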